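/- Let Γ be a finite connected simple graph of order n with diameter D(Γ), and let k be an integer. If S is a global defensive k-alliance in Γ such that the subgraph induced by S is connected, then |S| ≥ (√(4(D(Γ) + n − 1) + (1 − k)²) + (k − 1))/2; in particular the global connected defensive k-alliance number satisfies γ_k^{ca}(Γ) ≥ ⌈(√(4(D(Γ) + n − 1) + (1 − k)²) + (k − 1))/2⌉. -/

import Mathlib

/-- Number of neighbors that `v` has in `S`. -/
noncomputable def SimpleGraph.nbrCount {V : Type*} (G : SimpleGraph V) (S : Set V) (v : V) : ℕ :=
  (S ∩ {u | G.Adj v u}).ncard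

/-- Degree of a vertex, counted via `ncard`. -/
noncomputable def SimpleGraph.degN {V : Type*} (G : SimpleGraph V) (v : V) : ℕ :=
  {u | G.Adj v u}.ncard

/-- `S` is a defensive `k`-alliance. -/
def SimpleGraph.IsDefensiveAlliance {V : Type*} (G : SimpleGraph V) (k : ℤ) (S : Set V) : Prop :=
  S.Nonempty ∧ ∀ v ∈ S, (G.nbrCount Sᶜ v : ℤ) + k ≤ (G.nbrCount S v : ℤ)

/-- `S` is a dominating set. -/
def SimpleGraph.IsDominating {V : Type*} (G : SimpleGraph V) (S : Set V) : Prop :=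
  ∀ v ∈ Sᶜ, ∃ u ∈ S, G.Adj v u

/-- `S` is a global defensive `k`-alliance. -/
def SimpleGraph.IsGlobalDefensiveAlliance {V : Type*} (G : SimpleGraph V) (k : ℤ) (S : Set V) : Prop :=
  G.IsDefensiveAlliance k S ∧ G.IsDominating S

/-- Global defensive `k`-alliance number. -/
noncomputable def SimpleGraph.globalDefensiveAllianceNumber {V : Type*} (G : SimpleGraph V) (k : ℤ) : ℕ :=
  sInf {m | ∃ S : Set V, G.IsGlobalDefensiveAlliance k S ∧ S.ncard = m}

/-- Global connected defensive `k`-alliance number. -/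
noncomputable def SimpleGraph.globalConnectedDefensiveAllianceNumber {V : Type*}
    (G : SimpleGraph V) (k : ℤ) : ℕ :=
  sInf {m | ∃ S : Set V, G.IsGlobalDefensiveAlliance k S ∧ (G.induce S).Connected ∧ S.ncard = m}

private lemma alliance_core {V : Type*} [Fintype V]
    (G : SimpleGraph V) (hconn : G.Connected) (k : ℤ) (S : Set V)
    (hS : G.IsGlobalDefensiveAlliance k S) (hSc : (G.induce S).Connected) :
    ((G.diam : ℤ) + (Fintype.card V : ℤ) - 1
        ≤ (S.ncard : ℤ) * ((S.ncard : ℤ) + 1 - k)) ∧ k ≤ (S.ncard : ℤ) - 1 := by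
  classical
  obtain ⟨⟨hne, hall⟩, hdom⟩ := hS
  have hSfin : S.Finite := S.toFinite
  have hr1 : 1 ≤ S.ncard := (Set.ncard_pos hSfin).mpr hne
  -- per vertex bound: nbrCount S v ≤ r - 1
  have hdegS : ∀ v ∈ S, (G.nbrCount S v : ℤ) ≤ (S.ncard : ℤ) - 1 := by
    intro v hv
    have hsub : S ∩ {u | G.Adj v u} ⊆ S \ {v} := by
      rintro u ⟨huS, hadj⟩
      exact ⟨huS, fun h => G.ne_of_adj hadj h.symm⟩
    have h1 : G.nbrCount S v ≤ (S \ {v}).ncard :=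
      Set.ncard_le_ncard hsub hSfin.diff
    have h2 : (S \ {v}).ncard = S.ncard - 1 := Set.ncard_diff_singleton_of_mem hv
    rw [h2] at h1
    omega
  -- k ≤ r - 1
  have hk : k ≤ (S.ncard : ℤ) - 1 := by
    obtain ⟨v, hv⟩ := hne
    have := hall v hv
    have := hdegS v hv
    have : (0 : ℤ) ≤ (G.nbrCount Sᶜ v : ℤ) := Int.ofNat_nonneg _
    omega
  refine ⟨?_, hk⟩
  set r : ℤ := (S.ncard : ℤ) with hrdef
  -- Finset versions
  set Sf : Finset V := S.toFinset with hSf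
  set Cf : Finset V := Sᶜ.toFinset with hCf
  have hScard : Sf.card = S.ncard := by simp [hSf, Set.toFinset_card, Set.ncard_eq_toFinset_card']
  have hCcard : Sf.card + Cf.card = Fintype.card V := by
    rw [hSf, hCf, Set.toFinset_compl, Finset.card_add_card_compl]
  -- nbrCount Sᶜ v as a filter card
  have hnbrC : ∀ v, G.nbrCount Sᶜ v = (Cf.filter (fun u => G.Adj v u)).card := by
    intro v
    rw [SimpleGraph.nbrCount, Set.ncard_eq_toFinset_card']
    congr 1
    ext u
    simp [hCf]
  -- domination: |Cf| ≤ ∑_{v ∈ Sf} nbrCount Sᶜ v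
  have hdomsum : Cf.card ≤ ∑ v ∈ Sf, G.nbrCount Sᶜ v := by
    have hswap : ∑ v ∈ Sf, G.nbrCount Sᶜ v
        = ∑ u ∈ Cf, (Sf.filter (fun v => G.Adj v u)).card := by
      simp only [hnbrC, Finset.card_filter]
      exact Finset.sum_comm
    rw [hswap]
    have : ∀ u ∈ Cf, 1 ≤ (Sf.filter (fun v => G.Adj v u)).card := by
      intro u hu
      have huC : u ∈ Sᶜ := by simpa [hCf] using hu
      obtain ⟨w, hwS, hadj⟩ := hdom u huC
      have : w ∈ Sf.filter (fun v => G.Adj v u) := by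
        simp [hSf, Finset.mem_filter, hwS, hadj.symm]
      exact Finset.card_pos.mpr ⟨w, this⟩
    calc Cf.card = ∑ _u ∈ Cf, 1 := by simp
      _ ≤ _ := Finset.sum_le_sum this
  -- the counting bound: n ≤ r (r - k)  in ℤ
  have hcount : (Fintype.card V : ℤ) ≤ r * (r - k) := by
    have hstep : (Cf.card : ℤ) ≤ ∑ v ∈ Sf, ((G.nbrCount S v : ℤ) - k) := by
      calc (Cf.card : ℤ) ≤ ((∑ v ∈ Sf, G.nbrCount Sᶜ v : ℕ) : ℤ) := by exact_mod_cast hdomsum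
        _ = ∑ v ∈ Sf, (G.nbrCount Sᶜ v : ℤ) := by push_cast; ring
        _ ≤ ∑ v ∈ Sf, ((G.nbrCount S v : ℤ) - k) := by
            apply Finset.sum_le_sum
            intro v hv
            have hv' : v ∈ S := by simpa [hSf] using hv
            have := hall v hv'
            omega
    have hstep2 : ∑ v ∈ Sf, ((G.nbrCount S v : ℤ) - k) ≤ (Sf.card : ℤ) * (r - 1 - k) := by
      calc ∑ v ∈ Sf, ((G.nbrCount S v : ℤ) - k) ≤ ∑ _v ∈ Sf, (r - 1 - k) := by
            apply Finset.sum_le_sum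
            intro v hv
            have hv' : v ∈ S := by simpa [hSf] using hv
            have := hdegS v hv'
            omega
        _ = (Sf.card : ℤ) * (r - 1 - k) := by rw [Finset.sum_const, nsmul_eq_mul]
    have hcards : (Sf.card : ℤ) = r := by rw [hrdef]; exact_mod_cast hScard
    have htot : (Fintype.card V : ℤ) = r + (Cf.card : ℤ) := by
      rw [← hcards]; exact_mod_cast hCcard.symm
    rw [htot]
    have := hstep.trans hstep2
    rw [hcards] at this
    nlinarith [this]
  -- diameter bound: diam ≤ r + 1
  have hdiam : (G.diam : ℤ) ≤ r + 1 := by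
    have hVne : Nonempty V := ⟨hne.choose⟩
    obtain ⟨u, w, huw⟩ := G.exists_dist_eq_diam
    have pick : ∀ x : V, ∃ x' ∈ S, G.dist x x' ≤ 1 := by
      intro x
      by_cases hx : x ∈ S
      · exact ⟨x, hx, by rw [SimpleGraph.dist_self]; omega⟩
      · obtain ⟨y, hyS, hxy⟩ := hdom x hx
        refine ⟨y, hyS, ?_⟩
        have := G.dist_le (SimpleGraph.Walk.cons hxy SimpleGraph.Walk.nil)
        simpa using this
    obtain ⟨u', hu'S, hu'⟩ := pick u
    obtain ⟨w', hw'S, hw'⟩ := pick w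
    haveI : Fintype ↥S := hSfin.fintype
    have hcardS : Fintype.card ↥S = S.ncard := by
      rw [← Nat.card_eq_fintype_card, Nat.card_coe_set_eq]
    obtain ⟨p⟩ := hSc.preconnected ⟨u', hu'S⟩ ⟨w', hw'S⟩
    have hlen : p.bypass.length < Fintype.card ↥S := p.bypass_isPath.length_lt
    have hd : G.dist u' w' ≤ p.bypass.length := by
      have := G.dist_le (p.bypass.map (SimpleGraph.Embedding.induce S).toHom)
      rwa [SimpleGraph.Walk.length_map] at this
    have hd2 : G.dist u' w' < S.ncard := by omega
    have htri1 : G.dist u w ≤ G.dist u u' + G.dist u' w := hconn.dist_triangle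
    have htri2 : G.dist u' w ≤ G.dist u' w' + G.dist w' w := hconn.dist_triangle
    have hww' : G.dist w' w ≤ 1 := by rw [SimpleGraph.dist_comm]; exact hw'
    have : G.dist u w ≤ S.ncard + 1 := by omega
    rw [← huw, hrdef]
    exact_mod_cast this
  nlinarith [hcount, hdiam, hr1]

private lemma alliance_real_bound {V : Type*} [Fintype V]
    (G : SimpleGraph V) (hconn : G.Connected) (k : ℤ) (S : Set V)
    (hS : G.IsGlobalDefensiveAlliance k S) (hSc : (G.induce S).Connected) :
    (Real.sqrt (4 * ((G.diam : ℝ) + (Fintype.card V : ℝ) - 1) + (1 - (k : ℝ)) ^ 2) +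
        ((k : ℝ) - 1)) / 2 ≤ (S.ncard : ℝ) := by
  obtain ⟨hmain, hk⟩ := alliance_core G hconn k S hS hSc
  have hmain' := hmain
  have hk' := hk
  rify at hmain' hk'
  set R : ℝ := (S.ncard : ℝ) with hR
  set K : ℝ := (k : ℝ) with hK
  have hR0 : (0 : ℝ) ≤ R := by positivity
  have hpos : (0 : ℝ) ≤ 2 * R - K + 1 := by linarith
  have hle : 4 * ((G.diam : ℝ) + (Fintype.card V : ℝ) - 1) + (1 - K) ^ 2
      ≤ (2 * R - K + 1) ^ 2 := by nlinarith [hmain']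
  have hsqrt : Real.sqrt (4 * ((G.diam : ℝ) + (Fintype.card V : ℝ) - 1) + (1 - K) ^ 2)
      ≤ 2 * R - K + 1 := by
    calc Real.sqrt (4 * ((G.diam : ℝ) + (Fintype.card V : ℝ) - 1) + (1 - K) ^ 2)
        ≤ Real.sqrt ((2 * R - K + 1) ^ 2) := Real.sqrt_le_sqrt hle
      _ = 2 * R - K + 1 := Real.sqrt_sq hpos
  linarith

theorem global_connected_defensive_alliance_sqrt_bound {V : Type*} [Fintype V]
    (G : SimpleGraph V) (hconn : G.Connected) (k : ℤ) (S : Set V)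
    (hS : G.IsGlobalDefensiveAlliance k S) (hSc : (G.induce S).Connected) :
    (Real.sqrt (4 * ((G.diam : ℝ) + (Fintype.card V : ℝ) - 1) + (1 - (k : ℝ)) ^ 2) +
        ((k : ℝ) - 1)) / 2 ≤ (S.ncard : ℝ) ∧
      ⌈(Real.sqrt (4 * ((G.diam : ℝ) + (Fintype.card V : ℝ) - 1) + (1 - (k : ℝ)) ^ 2) +
          ((k : ℝ) - 1)) / 2⌉ ≤ (G.globalConnectedDefensiveAllianceNumber k : ℤ) := by
  constructor
  · exact alliance_real_bound G hconn k S hS hSc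
  · have hnonempty : {m | ∃ S' : Set V, G.IsGlobalDefensiveAlliance k S' ∧
        (G.induce S').Connected ∧ S'.ncard = m}.Nonempty := ⟨S.ncard, S, hS, hSc, rfl⟩
    obtain ⟨S', hS', hSc', hcard'⟩ := Nat.sInf_mem hnonempty
    rw [SimpleGraph.globalConnectedDefensiveAllianceNumber]
    rw [Int.ceil_le]
    push_cast
    rw [← hcard']
    exact alliance_real_bound G hconn k S' hS' hSc'
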